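/- In the derivative block ODE system, the quantity z = x_{D+} − x_{D−} satisfies the linear ODE ∂t z = s·(∂t x_{A+} − ∂t x_{A−}) − s·z, i.e., the annihilation terms cancel exactly in the difference of the two output species. -/

import Mathlib

/-- In the derivative block ODE system, z = x_{D+} - x_{D-} satisfies the linear ODE
∂t z = s·(∂t x_{A+} - ∂t x_{A-}) - s·z : the annihilation terms cancel exactly. -/
theorem derivative_block_difference_ode
    (xEp xEm xAp xAm xDp xDm : ℝ → ℝ) (r v s q : ℝ)
    (hr : 0 ≤ r) (hv : 0 < v) (hs : 0 < s) (hq : 0 < q)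
    (hEp_nonneg : ∀ t, 0 ≤ xEp t) (hEm_nonneg : ∀ t, 0 ≤ xEm t)
    (hDp : ∀ t, HasDerivAt xDp
      (s * v * r * xEp t + v * s * xAm t - s * xDp t - q * xDp t * xDm t) t)
    (hDm : ∀ t, HasDerivAt xDm
      (s * v * r * xEm t + v * s * xAp t - s * xDm t - q * xDp t * xDm t) t)
    (hAp : ∀ t, HasDerivAt xAp (v * r * xEp t - v * xAp t) t)
    (hAm : ∀ t, HasDerivAt xAm (v * r * xEm t - v * xAm t) t) :
    ∀ t, HasDerivAt (fun u => xDp u - xDm u)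
      (s * ((v * r * xEp t - v * xAp t) - (v * r * xEm t - v * xAm t))
        - s * (xDp t - xDm t)) t := by
  intro t
  have h := (hDp t).fun_sub (hDm t)
  exact h.congr_deriv (by ring)
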